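/- Let Φ ⊆ V* be a finite root system with base Δ and positive roots Φ⁺ as in the context. Let I ⊆ Δ. Then the following are equivalent: (a) no connected component of the Dynkin diagram of Δ is contained in I; (b) the set {α ∈ Φ⁺ : α ∉ span_ℝ(I)} spans span_ℝ(Φ) as a real vector space. -/

import Mathlib

variable {V : Type*} [AddCommGroup V] [Module ℝ V]

/-- The data of a finite (possibly non-reduced) root system `Φ` in the dual of the real
vector space `V`: every root `α` has a coroot `α∨` with `⟨α, α∨⟩ = 2`, the reflections
`s_α : χ ↦ χ - ⟨χ, α∨⟩ α` preserve `Φ`, and all pairings `⟨β, α∨⟩` are integers. -/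
structure RootSystemData (V : Type*) [AddCommGroup V] [Module ℝ V] where
  Φ : Finset (Module.Dual ℝ V)
  coroot : Module.Dual ℝ V → V
  pairing_self : ∀ α ∈ Φ, α (coroot α) = 2
  reflection_mem : ∀ α ∈ Φ, ∀ β ∈ Φ, β - β (coroot α) • α ∈ Φ
  pairing_int : ∀ α ∈ Φ, ∀ β ∈ Φ, ∃ m : ℤ, β (coroot α) = (m : ℝ)

/-- `Δ` is a base (system of simple roots) of the root system: it is linearly independent
and every root is either a nonnegative-integer or a nonpositive-integer combination of
elements of `Δ`. -/
structure RootSystemData.IsBase (R : RootSystemData V) (Δ : Finset (Module.Dual ℝ V)) :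
    Prop where
  subset : Δ ⊆ R.Φ
  linearIndependent :
    LinearIndependent ℝ (fun a : (Δ : Set (Module.Dual ℝ V)) => (a : Module.Dual ℝ V))
  decomposition : ∀ α ∈ R.Φ,
    (∃ c : Module.Dual ℝ V → ℕ, α = ∑ β ∈ Δ, (c β : ℝ) • β) ∨
    (∃ c : Module.Dual ℝ V → ℕ, α = -∑ β ∈ Δ, (c β : ℝ) • β)

/-- The set of positive roots with respect to the base `Δ`: the roots which are
nonnegative-integer combinations of simple roots. -/
def RootSystemData.posRoots (R : RootSystemData V) (Δ : Finset (Module.Dual ℝ V)) :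
    Set (Module.Dual ℝ V) :=
  {α | α ∈ R.Φ ∧ ∃ c : Module.Dual ℝ V → ℕ, α = ∑ β ∈ Δ, (c β : ℝ) • β}

/-- The Dynkin diagram of the base `Δ`: two distinct simple roots are adjacent if and
only if they pair nontrivially against each other's coroots. -/
def RootSystemData.dynkin (R : RootSystemData V) (Δ : Finset (Module.Dual ℝ V)) :
    SimpleGraph {a // a ∈ Δ} where
  Adj a b := a ≠ b ∧
    ((a : Module.Dual ℝ V) (R.coroot (b : Module.Dual ℝ V)) ≠ 0 ∨
      (b : Module.Dual ℝ V) (R.coroot (a : Module.Dual ℝ V)) ≠ 0)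
  symm := ⟨fun a b h => ⟨h.1.symm, h.2.symm⟩⟩
  loopless := ⟨fun a h => h.1 rfl⟩

lemma RootSystemData.dynkin_adj_iff (R : RootSystemData V) {Δ : Finset (Module.Dual ℝ V)}
    {a b : {a // a ∈ Δ}} : (R.dynkin Δ).Adj a b ↔ (a ≠ b ∧
    ((a : Module.Dual ℝ V) (R.coroot (b : Module.Dual ℝ V)) ≠ 0 ∨
      (b : Module.Dual ℝ V) (R.coroot (a : Module.Dual ℝ V)) ≠ 0)) := Iff.rfl


namespace RootSystemData

variable (R : RootSystemData V) {α β : Module.Dual ℝ V}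

lemma reflA (hα : α ∈ R.Φ) {p q : ℝ} (h : p • α + q • β ∈ R.Φ) :
    (-p - q * β (R.coroot α)) • α + q • β ∈ R.Φ := by
  have h2 := R.pairing_self α hα
  have hm := R.reflection_mem α hα _ h
  have hpair : (p • α + q • β) (R.coroot α) = p * 2 + q * β (R.coroot α) := by
    simp [h2, smul_eq_mul]
  rw [hpair] at hm
  have e : p • α + q • β - (p * 2 + q * β (R.coroot α)) • α
      = (-p - q * β (R.coroot α)) • α + q • β := by module
  rwa [e] at hm

lemma reflB (hβ : β ∈ R.Φ) {p q : ℝ} (h : p • α + q • β ∈ R.Φ) :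
    p • α + (-q - p * α (R.coroot β)) • β ∈ R.Φ := by
  have h2 := R.pairing_self β hβ
  have hm := R.reflection_mem β hβ _ h
  have hpair : (p • α + q • β) (R.coroot β) = p * α (R.coroot β) + q * 2 := by
    simp [h2, smul_eq_mul]
  rw [hpair] at hm
  have e : p • α + q • β - (p * α (R.coroot β) + q * 2) • β
      = p • α + (-q - p * α (R.coroot β)) • β := by module
  rwa [e] at hm

lemma no_unbounded (w : V) (h : ∀ n : ℕ, ∃ x ∈ R.Φ, (n : ℝ) ≤ |x w|) : False := by
  obtain ⟨M, hM⟩ := (R.Φ.finite_toSet.image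
    (fun x => |x w|)).bddAbove
  obtain ⟨x, hx, hle⟩ := h (⌈M⌉₊ + 1)
  have h1 : |x w| ≤ M := hM ⟨x, hx, rfl⟩
  have h2 := Nat.le_ceil M
  push_cast at hle
  nlinarith

lemma aux_zero (hα : α ∈ R.Φ) (hβ : β ∈ R.Φ)
    (h : α (R.coroot β) = 0) : β (R.coroot α) = 0 := by
  by_contra hc
  obtain ⟨mz, hmz⟩ := R.pairing_int α hα β hβ
  set c := β (R.coroot α) with hcdef
  have hc1 : 1 ≤ |c| := by
    rw [hmz] at hc ⊢
    rw [← Int.cast_abs]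
    exact_mod_cast Int.one_le_abs (by exact_mod_cast fun h0 => hc (by rw [h0]; simp))
  have key : ∀ m : ℕ, ((2 * m * c) • α + (1:ℝ) • β) ∈ R.Φ := by
    intro m
    induction m with
    | zero => simpa using hβ
    | succ n ih =>
      have s1 := R.reflA hα ih
      -- coefficient: -(2nc) - 1*c
      have s2 := R.reflB (α := α) hβ s1
      rw [h] at s2
      -- q coeff : -1 - p*0 = -1
      have e2 : (-(1:ℝ) - (-(2 * n * c) - 1 * c) * 0) = -1 := by ring
      rw [e2] at s2
      have s3 := R.reflA hα s2
      have s4 := R.reflB (α := α) hβ s3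
      rw [h] at s4
      have e4 : (-(-1:ℝ) - (-(-(2 * ↑n * c) - 1 * c) - -1 * c) * 0) = 1 := by ring
      rw [e4] at s4
      have e5 : (-(-(2 * (n:ℝ) * c) - 1 * c) - -1 * c) = 2 * ((n:ℝ)+1) * c := by ring
      rw [e5] at s4
      convert s4 using 3
      push_cast
      ring
  refine R.no_unbounded (R.coroot α) (fun n => ⟨(2 * n * c) • α + (1:ℝ) • β, key n, ?_⟩)
  have h2 := R.pairing_self α hα
  have heval : ((2 * (n:ℝ) * c) • α + (1:ℝ) • β) (R.coroot α) = (4 * n + 1) * c := by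
    simp [h2, smul_eq_mul]; ring
  rw [heval, abs_mul]
  have : (1:ℝ) ≤ |4 * (n:ℝ) + 1| := by
    rw [abs_of_nonneg (by positivity)]; nlinarith [Nat.cast_nonneg (α := ℝ) n]
  have hn : (n:ℝ) ≤ |4 * (n:ℝ) + 1| := by
    rw [abs_of_nonneg (by positivity)]; nlinarith [Nat.cast_nonneg (α := ℝ) n]
  nlinarith [abs_nonneg ((4 * (n:ℝ) + 1)), abs_nonneg c]
lemma aux_sign (hα : α ∈ R.Φ) (hβ : β ∈ R.Φ)
    (hb : 0 < α (R.coroot β)) (ha : β (R.coroot α) < 0) : False := by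
  obtain ⟨mb, hmb⟩ := R.pairing_int β hβ α hα
  obtain ⟨ma, hma⟩ := R.pairing_int α hα β hβ
  set b := α (R.coroot β) with hbdef
  set a := β (R.coroot α) with hadef
  have hb1 : 1 ≤ b := by
    rw [hmb] at hb ⊢
    have : (0:ℤ) < mb := by exact_mod_cast hb
    exact_mod_cast this
  have ha1 : a ≤ -1 := by
    rw [hma] at ha ⊢
    have : ma < 0 := by exact_mod_cast ha
    have : ma ≤ -1 := by omega
    exact_mod_cast this
  have key : ∀ n : ℕ, ∃ p q : ℝ, (p • α + q • β ∈ R.Φ) ∧ ((n:ℝ) + 1 ≤ p) ∧ 0 ≤ q := by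
    intro n
    induction n with
    | zero => exact ⟨1, 0, by simpa using hα, by norm_num, le_refl 0⟩
    | succ n ih =>
      obtain ⟨p, q, hmem, hp, hq⟩ := ih
      have hp1 : (1:ℝ) ≤ p := by nlinarith [Nat.cast_nonneg (α := ℝ) n]
      set q1 : ℝ := -q - p * b with hq1def
      set p2 : ℝ := -p - q1 * a with hp2def
      set q3 : ℝ := -q1 - p2 * b with hq3def
      set p4 : ℝ := -p2 - q3 * a with hp4def
      have hq1le : q1 ≤ -p := by nlinarith
      have hp2le : p2 ≤ -2 * p := by nlinarith
      have hq3ge : 3 * p ≤ q3 := by nlinarith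
      have hp4ge : 5 * p ≤ p4 := by nlinarith
      have s1 := R.reflB (α := α) hβ hmem
      rw [← hq1def] at s1
      have s2 := R.reflA (β := β) hα s1
      rw [← hadef, ← hp2def] at s2
      have s3 := R.reflB (α := α) hβ s2
      rw [← hbdef, ← hq3def] at s3
      have s4 := R.reflA (β := β) hα s3
      rw [← hadef, ← hp4def] at s4
      exact ⟨p4, q3, s4, by push_cast; nlinarith, by nlinarith⟩
  refine R.no_unbounded (R.coroot β) (fun n => ?_)
  obtain ⟨p, q, hmem, hp, hq⟩ := key n
  refine ⟨p • α + q • β, hmem, ?_⟩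
  have h2 := R.pairing_self β hβ
  have heval : (p • α + q • β) (R.coroot β) = p * b + q * 2 := by
    simp [h2, smul_eq_mul, ← hbdef]
  rw [heval, abs_of_nonneg (by nlinarith)]
  nlinarith

lemma pairing_pos (hα : α ∈ R.Φ) (hβ : β ∈ R.Φ)
    (h : 0 < α (R.coroot β)) : 0 < β (R.coroot α) := by
  rcases lt_trichotomy (β (R.coroot α)) 0 with h' | h' | h'
  · exact absurd (R.aux_sign hα hβ h h') id
  · exact absurd (R.aux_zero hβ hα h') (by intro h0; rw [h0] at h; exact lt_irrefl 0 h)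
  · exact h'
end RootSystemData
lemma exists_coords {V : Type*} [AddCommGroup V] [Module ℝ V] [FiniteDimensional ℝ V]
    {Δ : Finset (Module.Dual ℝ V)}
    (h : LinearIndependent ℝ (fun a : (Δ : Set (Module.Dual ℝ V)) => (a : Module.Dual ℝ V))) :
    ∃ v : Module.Dual ℝ V → V, ∀ δ ∈ Δ,
      δ (v δ) = 1 ∧ ∀ γ ∈ Δ, γ ≠ δ → γ (v δ) = 0 := by
  classical
  have h' : LinearIndepOn ℝ id (Δ : Set (Module.Dual ℝ V)) := h
  let B := Module.Basis.extend h'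
  have hsub : (Δ : Set (Module.Dual ℝ V)) ⊆ h'.extend (Set.subset_univ _) :=
    h'.subset_extend _
  refine ⟨fun δ => if hδ : δ ∈ Δ then
      (Module.evalEquiv ℝ V).symm (B.coord ⟨δ, hsub hδ⟩) else 0, fun δ hδ => ?_⟩
  have happly : ∀ (γ : Module.Dual ℝ V) (φ : Module.Dual ℝ (Module.Dual ℝ V)),
      γ ((Module.evalEquiv ℝ V).symm φ) = φ γ := by
    intro γ φ
    conv_rhs => rw [← (Module.evalEquiv ℝ V).apply_symm_apply φ]
    rfl
  have hcoord : ∀ γ, (hγ : γ ∈ Δ) → B.coord ⟨δ, hsub hδ⟩ γ = if γ = δ then 1 else 0 := by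
    intro γ hγ
    have hBγ : B ⟨γ, hsub hγ⟩ = γ := Module.Basis.extend_apply_self h' ⟨γ, hsub hγ⟩
    rw [← hBγ, Module.Basis.coord_apply, Module.Basis.repr_self, Finsupp.single_apply, hBγ]
    by_cases hgd : γ = δ <;> simp [Subtype.ext_iff, hgd]
  constructor
  · simp only [dif_pos hδ]
    rw [happly, hcoord δ hδ, if_pos rfl]
  · intro γ hγ hne
    simp only [dif_pos hδ]
    rw [happly, hcoord γ hγ, if_neg hne]

section Coords

variable {V : Type*} [AddCommGroup V] [Module ℝ V]
variable {Δ I : Finset (Module.Dual ℝ V)} {v : Module.Dual ℝ V → V}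

lemma sum_coord (hv : ∀ δ ∈ Δ, δ (v δ) = 1 ∧ ∀ γ ∈ Δ, γ ≠ δ → γ (v δ) = 0)
    (c : Module.Dual ℝ V → ℝ) {δ : Module.Dual ℝ V} (hδ : δ ∈ Δ) :
    (∑ β ∈ Δ, c β • β) (v δ) = c δ := by
  classical
  rw [LinearMap.coe_sum, Finset.sum_apply]
  rw [Finset.sum_eq_single_of_mem δ hδ (fun β hβ hne => by
    simp [smul_eq_mul, (hv δ hδ).2 β hβ hne])]
  simp [smul_eq_mul, (hv δ hδ).1]

lemma span_coord_zero (hv : ∀ δ ∈ Δ, δ (v δ) = 1 ∧ ∀ γ ∈ Δ, γ ≠ δ → γ (v δ) = 0)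
    (hI : I ⊆ Δ) {x : Module.Dual ℝ V}
    (hx : x ∈ Submodule.span ℝ (I : Set (Module.Dual ℝ V)))
    {δ : Module.Dual ℝ V} (hδ : δ ∈ Δ) (hδI : δ ∉ I) : x (v δ) = 0 := by
  induction hx using Submodule.span_induction with
  | mem y hy =>
      exact (hv δ hδ).2 y (hI hy) (fun h => hδI (h ▸ hy))
  | zero => simp
  | add y z _ _ hy hz => simp [hy, hz]
  | smul a y _ hy => simp [hy]

lemma mem_span_of_coords (hI : I ⊆ Δ) (c : Module.Dual ℝ V → ℝ)
    (hc : ∀ δ ∈ Δ, δ ∉ I → c δ = 0) :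
    (∑ β ∈ Δ, c β • β) ∈ Submodule.span ℝ (I : Set (Module.Dual ℝ V)) := by
  rw [← Finset.sum_subset hI (fun β hβ hβI => by rw [hc β hβ hβI, zero_smul])]
  exact Submodule.sum_mem _ (fun β hβ =>
    Submodule.smul_mem _ _ (Submodule.subset_span hβ))

lemma pos_of_coord {R : RootSystemData V} (hΔ : R.IsBase Δ)
    (hv : ∀ δ ∈ Δ, δ (v δ) = 1 ∧ ∀ γ ∈ Δ, γ ≠ δ → γ (v δ) = 0)
    {θ : Module.Dual ℝ V} (hθ : θ ∈ R.Φ) {δ : Module.Dual ℝ V} (hδ : δ ∈ Δ)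
    (hpos : 0 < θ (v δ)) :
    ∃ c : Module.Dual ℝ V → ℕ, θ = ∑ β ∈ Δ, (c β : ℝ) • β := by
  rcases hΔ.decomposition θ hθ with ⟨c, hc⟩ | ⟨c, hc⟩
  · exact ⟨c, hc⟩
  · exfalso
    rw [hc] at hpos
    rw [LinearMap.neg_apply, sum_coord hv (fun β => (c β : ℝ)) hδ] at hpos
    have : (0:ℝ) ≤ (c δ : ℝ) := Nat.cast_nonneg _
    linarith

end Coords


lemma supp_lemma {V : Type*} [AddCommGroup V] [Module ℝ V]
    {Δ : Finset (Module.Dual ℝ V)} {v : Module.Dual ℝ V → V}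
    (R : RootSystemData V) (hΔ : R.IsBase Δ)
    (hv : ∀ δ ∈ Δ, δ (v δ) = 1 ∧ ∀ γ ∈ Δ, γ ≠ δ → γ (v δ) = 0)
    (C : Set (Module.Dual ℝ V))
    (hclosed : ∀ γ ∈ C, ∀ β ∈ Δ, β ∉ C →
      β (R.coroot γ) = 0 ∧ γ (R.coroot β) = 0) :
    ∀ n (θ : Module.Dual ℝ V) (c : Module.Dual ℝ V → ℕ), θ ∈ R.Φ →
      θ = ∑ β ∈ Δ, (c β : ℝ) • β → ∑ β ∈ Δ, c β = n →
      (∃ γ ∈ Δ, γ ∈ C ∧ c γ ≠ 0) → ∀ δ ∈ Δ, c δ ≠ 0 → δ ∈ C := by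
  classical
  intro n
  induction n using Nat.strong_induction_on with
  | _ n IH =>
  rintro θ c hθΦ hrep hsum ⟨γ0, hγ0Δ, hγ0C, hγ0c⟩ δ0 hδ0Δ hδ0c
  by_contra hδ0C
  have hcoordθ : ∀ δ ∈ Δ, θ (v δ) = (c δ : ℝ) := fun δ hδ => by
    rw [hrep]; exact sum_coord hv _ hδ
  have h2 : θ (R.coroot θ) = 2 := R.pairing_self θ hθΦ
  have hex : ∃ γ ∈ Δ, c γ ≠ 0 ∧ 0 < γ (R.coroot θ) := by
    by_contra hno
    push_neg at hno
    have hle : θ (R.coroot θ) ≤ 0 := by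
      set w := R.coroot θ with hw
      rw [hrep, LinearMap.coe_sum, Finset.sum_apply]
      refine Finset.sum_nonpos fun β hβ => ?_
      rcases eq_or_ne (c β) 0 with h | h
      · simp [h]
      · have h1 := hno β hβ h
        have h0 : (0:ℝ) ≤ (c β : ℝ) := Nat.cast_nonneg _
        simp only [LinearMap.smul_apply, smul_eq_mul]
        exact mul_nonpos_of_nonneg_of_nonpos h0 h1
    linarith
  obtain ⟨γ, hγΔ, hγc, hγpos⟩ := hex
  have hγΦ : γ ∈ R.Φ := hΔ.subset hγΔ
  have hθγpos : 0 < θ (R.coroot γ) := R.pairing_pos hγΦ hθΦ hγpos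
  obtain ⟨mi, hmi⟩ := R.pairing_int γ hγΦ θ hθΦ
  set t := θ (R.coroot γ) with ht
  have hm1 : (1:ℝ) ≤ t := by
    rw [hmi] at hθγpos ⊢
    have : (0:ℤ) < mi := by exact_mod_cast hθγpos
    exact_mod_cast this
  have hθ'Φ : θ - t • γ ∈ R.Φ := R.reflection_mem γ hγΦ θ hθΦ
  set θ' := θ - t • γ with hθ'def
  have hcoord' : ∀ δ ∈ Δ, θ' (v δ) = (c δ : ℝ) - (if δ = γ then t else 0) := by
    intro δ hδ
    have he : θ' (v δ) = θ (v δ) - t * γ (v δ) := by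
      simp [hθ'def, smul_eq_mul]
    rw [he, hcoordθ δ hδ]
    rcases eq_or_ne δ γ with rfl | hne
    · rw [(hv δ hδ).1, if_pos rfl]; ring
    · rw [(hv δ hδ).2 γ hγΔ (fun h => hne h.symm), if_neg hne]; ring
  have hepsilon : ∃ ε ∈ Δ, ε ≠ γ ∧ c ε ≠ 0 := by
    rcases eq_or_ne γ0 γ with rfl | hne
    · exact ⟨δ0, hδ0Δ, fun h => hδ0C (by rw [h]; exact hγ0C), hδ0c⟩
    · exact ⟨γ0, hγ0Δ, hne, hγ0c⟩
  obtain ⟨ε, hεΔ, hεγ, hεc⟩ := hepsilon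
  have hθ'pos : 0 < θ' (v ε) := by
    rw [hcoord' ε hεΔ, if_neg hεγ, sub_zero]
    exact_mod_cast Nat.pos_of_ne_zero hεc
  obtain ⟨c', hc'⟩ := pos_of_coord hΔ hv hθ'Φ hεΔ hθ'pos
  have hcoefs : ∀ δ ∈ Δ, (c' δ : ℝ) = (c δ : ℝ) - (if δ = γ then t else 0) := by
    intro δ hδ
    rw [← hcoord' δ hδ, hc']
    exact (sum_coord hv (fun β => (c' β : ℝ)) hδ).symm
  have hθ'γ : θ' (R.coroot γ) = -t := by
    simp only [hθ'def, LinearMap.sub_apply, LinearMap.smul_apply, smul_eq_mul,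
      R.pairing_self γ hγΦ, ← ht]
    ring
  have hexp : θ' (R.coroot γ) = ∑ β ∈ Δ, (c' β : ℝ) * β (R.coroot γ) := by
    conv_lhs => rw [hc']
    rw [LinearMap.coe_sum, Finset.sum_apply]
    simp [smul_eq_mul]
  have hi : ∃ γ1 ∈ Δ, γ1 ∈ C ∧ c' γ1 ≠ 0 := by
    by_cases hγC : γ ∈ C
    · by_contra hno
      push_neg at hno
      have hz : θ' (R.coroot γ) = 0 := by
        rw [hexp]
        refine Finset.sum_eq_zero fun β hβ => ?_
        by_cases hβC : β ∈ C
        · rw [hno β hβ hβC]; simp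
        · rw [(hclosed γ hγC β hβ hβC).1, mul_zero]
      rw [hθ'γ] at hz; linarith
    · refine ⟨γ0, hγ0Δ, hγ0C, ?_⟩
      have hne : γ0 ≠ γ := fun h => hγC (h ▸ hγ0C)
      have he := hcoefs γ0 hγ0Δ
      rw [if_neg hne, sub_zero] at he
      have : c' γ0 = c γ0 := by exact_mod_cast he
      simpa [this] using hγ0c
  have hii : ∃ δ1 ∈ Δ, δ1 ∉ C ∧ c' δ1 ≠ 0 := by
    by_cases hγC : γ ∈ C
    · refine ⟨δ0, hδ0Δ, hδ0C, ?_⟩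
      have hne : δ0 ≠ γ := fun h => hδ0C (by rw [h]; exact hγC)
      have he := hcoefs δ0 hδ0Δ
      rw [if_neg hne, sub_zero] at he
      have : c' δ0 = c δ0 := by exact_mod_cast he
      simpa [this] using hδ0c
    · by_contra hno
      push_neg at hno
      have hz : θ' (R.coroot γ) = 0 := by
        rw [hexp]
        refine Finset.sum_eq_zero fun β hβ => ?_
        by_cases hβC : β ∈ C
        · rw [(hclosed β hβC γ hγΔ hγC).2, mul_zero]
        · rw [hno β hβ hβC]; simp
      rw [hθ'γ] at hz; linarith
  obtain ⟨δ1, hδ1Δ, hδ1C, hδ1c⟩ := hii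
  have hsum' : (∑ β ∈ Δ, (c' β : ℝ)) = (n : ℝ) - t := by
    rw [Finset.sum_congr rfl hcoefs, Finset.sum_sub_distrib,
      Finset.sum_ite_eq' Δ γ (fun _ => t), if_pos hγΔ]
    rw [← Nat.cast_sum, hsum]
  have hlt : (∑ β ∈ Δ, c' β) < n := by
    have : ((∑ β ∈ Δ, c' β : ℕ) : ℝ) < n := by
      rw [Nat.cast_sum, hsum']; linarith
    exact_mod_cast this
  exact hδ1C (IH _ hlt θ' c' hθ'Φ hc' rfl hi δ1 hδ1Δ hδ1c)


lemma indicator_sum {V : Type*} [AddCommGroup V] [Module ℝ V]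
    {Δ : Finset (Module.Dual ℝ V)} {a : Module.Dual ℝ V} (ha : a ∈ Δ) :
    [DecidableEq (Module.Dual ℝ V)] →
    ∑ β ∈ Δ, (((if β = a then 1 else 0 : ℕ)) : ℝ) • β = a := by
  intro _
  rw [Finset.sum_eq_single_of_mem a ha (fun β hβ hne => by simp [hne])]
  simp

lemma walk_lemma {V : Type*} [AddCommGroup V] [Module ℝ V]
    {Δ I : Finset (Module.Dual ℝ V)} {v : Module.Dual ℝ V → V}
    (R : RootSystemData V) (hΔ : R.IsBase Δ) (hI : I ⊆ Δ)
    (hv : ∀ δ ∈ Δ, δ (v δ) = 1 ∧ ∀ γ ∈ Δ, γ ≠ δ → γ (v δ) = 0) :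
    ∀ n : ℕ, ∀ a : {x // x ∈ Δ},
      (∃ b : {x // x ∈ Δ}, (b : Module.Dual ℝ V) ∉ I ∧ ∃ f : ℕ → {x // x ∈ Δ},
        f 0 = a ∧ f n = b ∧ ∀ k < n, (R.dynkin Δ).Adj (f k) (f (k+1))) →
      (a : Module.Dual ℝ V) ∈ Submodule.span ℝ
        {α | α ∈ R.posRoots Δ ∧ α ∉ Submodule.span ℝ (I : Set (Module.Dual ℝ V))} := by
  classical
  intro n
  induction n using Nat.strong_induction_on with
  | _ n IH =>
  intro a hex
  set T := Submodule.span ℝ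
      {α | α ∈ R.posRoots Δ ∧ α ∉ Submodule.span ℝ (I : Set (Module.Dual ℝ V))} with hT
  set P : ℕ → Prop := fun k => ∃ b : {x // x ∈ Δ}, (b : Module.Dual ℝ V) ∉ I ∧ ∃ f : ℕ → {x // x ∈ Δ},
    f 0 = a ∧ f k = b ∧ ∀ j < k, (R.dynkin Δ).Adj (f j) (f (j+1)) with hP
  have hPn : P n := hex
  set m := sInf {k | P k} with hmdef
  have hm : m ∈ {k | P k} := Nat.sInf_mem (⟨n, hPn⟩ : {k | P k}.Nonempty)
  have hmn : m ≤ n := Nat.sInf_le (show n ∈ {k | P k} from hPn)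
  have hmin : ∀ k, P k → m ≤ k := fun k hk => Nat.sInf_le (show k ∈ {k | P k} from hk)
  obtain ⟨b, hbI, f, hf0, hfm, hadj⟩ := hm
  rcases Nat.eq_zero_or_pos m with hm0 | hmpos
  · -- a = b ∉ I
    have hab : a = b := by rw [← hf0, ← hfm, hm0]
    refine Submodule.subset_span ⟨⟨hΔ.subset a.2, fun β => if β = (a : Module.Dual ℝ V) then 1 else 0,
      (indicator_sum a.2).symm⟩, fun hsp => ?_⟩
    have := span_coord_zero hv hI hsp a.2 (by rw [hab]; exact hbI)
    rw [(hv (a : Module.Dual ℝ V) a.2).1] at this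
    exact one_ne_zero this
  -- main case
  set γ : ℕ → {x // x ∈ Δ} := fun j => f (m - j) with hγdef
  have hγ0 : γ 0 = b := by simp [hγdef, hfm]
  have hγm : γ m = a := by simp [hγdef, hf0]
  have hadjγ : ∀ j < m, (R.dynkin Δ).Adj (γ (j+1)) (γ j) := by
    intro j hj
    have h1 : m - (j+1) < m := by omega
    have h2 : m - (j+1) + 1 = m - j := by omega
    have := hadj (m - (j+1)) h1
    rwa [h2] at this
  have hdist : ∀ j < m, ((γ j : Module.Dual ℝ V)) ∈ T := by
    intro j hj
    refine IH j (lt_of_lt_of_le hj hmn) (γ j) ⟨b, hbI, fun k => f (m - j + k), ?_, ?_, ?_⟩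
    · simp [hγdef]
    · beta_reduce
      rw [show m - j + j = m by omega, hfm]
    · intro k hk
      beta_reduce
      exact hadj (m - j + k) (by omega)
  -- no repetitions, no chords
  have hneq : ∀ i j, i < j → j ≤ m → γ i ≠ γ j := by
    intro i j hij hjm heq
    rcases eq_or_lt_of_le (Nat.succ_le_of_lt hij) with hj1 | hj1
    · -- j = i + 1 : adjacent hence distinct
      have := ((R.dynkin_adj_iff).1 (hadjγ i (by omega))).1
      rw [← hj1] at heq
      exact this heq.symm
    · -- surgery
      have hP' : P (m - j + i) := by
        refine ⟨b, hbI, fun k => if k ≤ m - j then f k else f (k + (j - i)), ?_, ?_, ?_⟩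
        · simp [hf0]
        · beta_reduce
          rcases Nat.eq_zero_or_pos i with hi0 | hipos
          · subst hi0
            rw [if_pos (by omega)]
            rw [← hγ0, heq, hγdef]
            simp
          · rw [if_neg (by omega), show m - j + i + (j - i) = m by omega, hfm]
        · intro k hk
          beta_reduce
          rcases Nat.lt_or_ge (k+1) (m - j + 1) with hc1 | hc1
          · rw [if_pos (by omega), if_pos (by omega)]
            exact hadj k (by omega)
          · rcases Nat.eq_or_lt_of_le hc1 with hc2 | hc2
            · -- k = m - j
              have hkeq : k = m - j := by omega
              rw [if_pos (by omega), if_neg (by omega), hkeq,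
                show m - j + 1 + (j - i) = m - i + 1 by omega]
              have heq' : f (m - j) = f (m - i) := heq.symm
              rw [heq']
              exact hadj (m - i) (by omega)
            · rw [if_neg (by omega), if_neg (by omega)]
              have := hadj (k + (j - i)) (by omega)
              rwa [show k + (j - i) + 1 = k + 1 + (j - i) by omega] at this
      have := hmin _ hP'
      omega
  have hnadj : ∀ i j, i + 1 < j → j ≤ m → ¬ (R.dynkin Δ).Adj (γ i) (γ j) := by
    intro i j hij hjm hadjij
    have hP' : P (m - j + i + 1) := by
      refine ⟨b, hbI, fun k => if k ≤ m - j then f k else f (k + (j - i - 1)), ?_, ?_, ?_⟩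
      · simp [hf0]
      · beta_reduce
        rw [if_neg (by omega), show m - j + i + 1 + (j - i - 1) = m by omega, hfm]
      · intro k hk
        beta_reduce
        rcases Nat.lt_or_ge (k+1) (m - j + 1) with hc1 | hc1
        · rw [if_pos (by omega), if_pos (by omega)]
          exact hadj k (by omega)
        · rcases Nat.eq_or_lt_of_le hc1 with hc2 | hc2
          · have hkeq : k = m - j := by omega
            rw [if_pos (by omega), if_neg (by omega), hkeq,
              show m - j + 1 + (j - i - 1) = m - i by omega]
            exact hadjij.symm
          · rw [if_neg (by omega), if_neg (by omega)]
            have := hadj (k + (j - i - 1)) (by omega)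
            rwa [show k + (j - i - 1) + 1 = k + 1 + (j - i - 1) by omega] at this
    have := hmin _ hP'
    omega
  have hzero : ∀ i j, i + 1 < j → j ≤ m →
      (γ i : Module.Dual ℝ V) (R.coroot (γ j)) = 0 ∧ (γ j : Module.Dual ℝ V) (R.coroot (γ i)) = 0 := by
    intro i j hij hjm
    have hne := hneq i j (by omega) hjm
    have hna := hnadj i j hij hjm
    constructor
    · by_contra hcon
      exact hna ((R.dynkin_adj_iff).2 ⟨hne, Or.inl hcon⟩)
    · by_contra hcon
      exact hna ((R.dynkin_adj_iff).2 ⟨hne, Or.inr hcon⟩)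
  -- build the root
  set θseq : ℕ → Module.Dual ℝ V := fun j => Nat.rec ((γ 0 : Module.Dual ℝ V))
    (fun j θ => θ - θ (R.coroot (γ (j+1))) • ((γ (j+1) : Module.Dual ℝ V))) j with hθdef
  have hθstep : ∀ j, θseq (j+1)
      = θseq j - (θseq j) (R.coroot (γ (j+1))) • ((γ (j+1) : Module.Dual ℝ V)) := fun j => rfl
  have hQ : ∀ j ≤ m, θseq j ∈ R.Φ ∧ ∃ e : ℕ → ℝ,
      θseq j = ∑ i ∈ Finset.range (j+1), e i • ((γ i : Module.Dual ℝ V)) ∧ e 0 = 1 ∧ e j ≠ 0 := by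
    intro j
    induction j with
    | zero =>
      intro _
      exact ⟨hΔ.subset (γ 0).2, fun _ => 1, by simp; rfl, rfl, one_ne_zero⟩
    | succ j IHj =>
      intro hjm
      obtain ⟨hmem, e, hrepe, he0, hej⟩ := IHj (by omega)
      have hγj1Φ : ((γ (j+1) : Module.Dual ℝ V)) ∈ R.Φ := hΔ.subset (γ (j+1)).2
      have hmem' : θseq (j+1) ∈ R.Φ := by
        rw [hθstep j]
        exact R.reflection_mem _ hγj1Φ _ hmem
      set t := (θseq j) (R.coroot (γ (j+1))) with htdef
      have htval : t = e j * (γ j : Module.Dual ℝ V) (R.coroot (γ (j+1))) := by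
        rw [htdef, hrepe, LinearMap.coe_sum, Finset.sum_apply]
        rw [Finset.sum_eq_single_of_mem j (Finset.self_mem_range_succ j)
          (fun i hi hne => ?_)]
        · simp [smul_eq_mul]
        · have hilt : i < j := by
            have := Finset.mem_range.mp hi; omega
          simp [smul_eq_mul, (hzero i (j+1) (by omega) hjm).1]
      have hnz : (γ j : Module.Dual ℝ V) (R.coroot (γ (j+1))) ≠ 0 := by
        rcases ((R.dynkin_adj_iff).1 (hadjγ j (by omega))).2 with hcase | hcase
        · exact fun h0 => hcase (R.aux_zero (hΔ.subset (γ j).2) hγj1Φ h0)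
        · exact hcase
      have hsum2 : ∑ i ∈ Finset.range (j+2),
          (fun i => if i = j+1 then -t else e i) i • ((γ i : Module.Dual ℝ V))
          = ∑ i ∈ Finset.range (j+1), e i • ((γ i : Module.Dual ℝ V))
            + (-t) • ((γ (j+1) : Module.Dual ℝ V)) := by
        rw [Finset.sum_range_succ]
        beta_reduce
        rw [if_pos rfl]
        congr 1
        refine Finset.sum_congr rfl (fun i hi => ?_)
        rw [if_neg (by have := Finset.mem_range.mp hi; omega)]
      refine ⟨hmem', fun i => if i = j+1 then -t else e i, ?_, ?_, ?_⟩
      · rw [hθstep j, ← htdef, hsum2]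
        conv_lhs => rw [hrepe]
        module
      · beta_reduce
        rw [if_neg (by omega)]; exact he0
      · beta_reduce
        rw [if_pos rfl, htval]
        simp only [neg_ne_zero]
        exact mul_ne_zero hej hnz
  obtain ⟨hθΦ, e, hrepe, he0, hem⟩ := hQ m le_rfl
  -- coordinates of θ at γ 0
  have hcoord0 : (θseq m) (v (γ 0 : Module.Dual ℝ V)) = 1 := by
    rw [hrepe, LinearMap.coe_sum, Finset.sum_apply]
    rw [Finset.sum_eq_single_of_mem 0 (Finset.mem_range.mpr (by omega))
      (fun i hi hne => ?_)]
    · simp [smul_eq_mul, he0, (hv (γ 0 : Module.Dual ℝ V) (γ 0).2).1]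
    · have hne' : γ 0 ≠ γ i := fun h =>
        (hneq 0 i (Nat.pos_of_ne_zero hne) (by have := Finset.mem_range.mp hi; omega)) h
      have : ((γ i : Module.Dual ℝ V)) (v (γ 0 : Module.Dual ℝ V)) = 0 :=
        (hv (γ 0 : Module.Dual ℝ V) (γ 0).2).2 _ (γ i).2 (fun h => hne' (Subtype.ext h.symm))
      simp [smul_eq_mul, this]
  have hθT : θseq m ∈ T := by
    have hb0 : ((γ 0 : Module.Dual ℝ V)) ∉ I := by rw [hγ0]; exact hbI
    obtain ⟨c, hc⟩ := pos_of_coord hΔ hv hθΦ (γ 0).2 (by rw [hcoord0]; norm_num)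
    refine Submodule.subset_span ⟨⟨hθΦ, c, hc⟩, fun hsp => ?_⟩
    have := span_coord_zero hv hI hsp (γ 0).2 hb0
    rw [hcoord0] at this
    exact one_ne_zero this
  -- extract a
  have hsplit : (e m) • ((γ m : Module.Dual ℝ V))
      = θseq m - ∑ i ∈ Finset.range m, e i • ((γ i : Module.Dual ℝ V)) := by
    rw [hrepe, Finset.sum_range_succ]
    abel
  have hmemT : (e m) • ((γ m : Module.Dual ℝ V)) ∈ T := by
    rw [hsplit]
    exact Submodule.sub_mem _ hθT (Submodule.sum_mem _ (fun i hi =>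
      Submodule.smul_mem _ _ (hdist i (Finset.mem_range.mp hi))))
  have : ((γ m : Module.Dual ℝ V)) ∈ T := by
    have h2 := Submodule.smul_mem T (e m)⁻¹ hmemT
    rwa [inv_smul_smul₀ hem] at h2
  rwa [hγm] at this


/-- Let `Φ` be a root system with base `Δ` and let `I ⊆ Δ`. Then no connected component
of the Dynkin diagram of `Δ` is contained in `I` (i.e. every vertex of `Δ` can reach a
vertex outside `I`) if and only if the positive roots not lying in the span of `I` span
the span of `Φ`. -/
theorem nondegenerateType_iff [FiniteDimensional ℝ V]
    (R : RootSystemData V) {Δ : Finset (Module.Dual ℝ V)} (hΔ : R.IsBase Δ)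
    {I : Finset (Module.Dual ℝ V)} (hI : I ⊆ Δ) :
    (∀ a : {a // a ∈ Δ}, ∃ b : {a // a ∈ Δ},
        (R.dynkin Δ).Reachable a b ∧ (b : Module.Dual ℝ V) ∉ I) ↔
      Submodule.span ℝ
          {α | α ∈ R.posRoots Δ ∧ α ∉ Submodule.span ℝ (I : Set (Module.Dual ℝ V))} =
        Submodule.span ℝ (R.Φ : Set (Module.Dual ℝ V)) := by
  classical
  obtain ⟨v, hv⟩ := exists_coords hΔ.linearIndependent
  constructor
  · intro hreach
    apply le_antisymm
    · refine Submodule.span_le.mpr ?_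
      rintro α ⟨⟨hαΦ, -⟩, -⟩
      exact Submodule.subset_span (Finset.mem_coe.mpr hαΦ)
    · refine Submodule.span_le.mpr ?_
      intro α hαΦ
      have hΔspan : ∀ δ ∈ Δ, δ ∈ Submodule.span ℝ
          {α | α ∈ R.posRoots Δ ∧ α ∉ Submodule.span ℝ (I : Set (Module.Dual ℝ V))} := by
        intro δ hδ
        obtain ⟨b, hreach', hbI⟩ := hreach ⟨δ, hδ⟩
        obtain ⟨p⟩ := hreach'
        exact walk_lemma R hΔ hI hv p.length ⟨δ, hδ⟩
          ⟨b, hbI, p.getVert, p.getVert_zero, p.getVert_length,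
            fun k hk => p.adj_getVert_succ hk⟩
      rcases hΔ.decomposition α (Finset.mem_coe.mp hαΦ) with ⟨c, hc⟩ | ⟨c, hc⟩
      · rw [hc]
        exact Submodule.sum_mem _ fun β hβ => Submodule.smul_mem _ _ (hΔspan β hβ)
      · rw [hc]
        exact Submodule.neg_mem _ (Submodule.sum_mem _ fun β hβ =>
          Submodule.smul_mem _ _ (hΔspan β hβ))
  · intro hspan
    by_contra hcon
    push_neg at hcon
    obtain ⟨a, ha⟩ := hcon
    set C : Set (Module.Dual ℝ V) :=
      {x | ∃ h : x ∈ Δ, (R.dynkin Δ).Reachable a ⟨x, h⟩} with hCdef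
    have haC : (a : Module.Dual ℝ V) ∈ C := ⟨a.2, by exact SimpleGraph.Reachable.refl _⟩
    have hCI : ∀ x ∈ C, x ∈ I := by
      rintro x ⟨hxΔ, hr⟩
      exact ha ⟨x, hxΔ⟩ hr
    have hclosed : ∀ γ ∈ C, ∀ β ∈ Δ, β ∉ C →
        β (R.coroot γ) = 0 ∧ γ (R.coroot β) = 0 := by
      rintro γ ⟨hγΔ, hγr⟩ β hβ hβC
      by_contra hcon2
      rw [not_and_or] at hcon2
      have hne : γ ≠ β := by
        intro h
        exact hβC (h ▸ (⟨hγΔ, hγr⟩ : γ ∈ C))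
      have hadj : (R.dynkin Δ).Adj ⟨γ, hγΔ⟩ ⟨β, hβ⟩ := by
        refine (R.dynkin_adj_iff).2 ⟨fun h => hne (congrArg Subtype.val h), ?_⟩
        rcases hcon2 with h | h
        · exact Or.inr (by simpa using h)
        · exact Or.inl (by simpa using h)
      exact hβC ⟨hβ, hγr.trans hadj.reachable⟩
    have hSzero : ∀ x ∈ {α | α ∈ R.posRoots Δ ∧
        α ∉ Submodule.span ℝ (I : Set (Module.Dual ℝ V))},
        x (v (a : Module.Dual ℝ V)) = 0 := by
      rintro x ⟨⟨hxΦ, c, hc⟩, hxI⟩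
      by_contra hxa
      have hca : ((c (a : Module.Dual ℝ V) : ℝ)) ≠ 0 := by
        rw [← sum_coord hv (fun β => (c β : ℝ)) a.2, ← hc]
        exact hxa
      have hsupp := supp_lemma R hΔ hv C hclosed (∑ β ∈ Δ, c β) x c hxΦ hc rfl
        ⟨(a : Module.Dual ℝ V), a.2, haC, by exact_mod_cast hca⟩
      apply hxI
      rw [hc]
      refine mem_span_of_coords hI _ (fun δ hδ hδI => ?_)
      by_contra hcδ
      have : c δ ≠ 0 := by exact_mod_cast hcδ
      exact hδI (hCI δ (hsupp δ hδ this))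
    have hmem : (a : Module.Dual ℝ V) ∈
        Submodule.span ℝ (R.Φ : Set (Module.Dual ℝ V)) :=
      Submodule.subset_span (Finset.mem_coe.mpr (hΔ.subset a.2))
    rw [← hspan] at hmem
    have hker : Submodule.span ℝ {α | α ∈ R.posRoots Δ ∧
        α ∉ Submodule.span ℝ (I : Set (Module.Dual ℝ V))} ≤
        LinearMap.ker (LinearMap.applyₗ (R := ℝ) (v (a : Module.Dual ℝ V))) :=
      Submodule.span_le.mpr (fun x hx => LinearMap.mem_ker.mpr (hSzero x hx))
    have hz := hker hmem
    rw [LinearMap.mem_ker] at hz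
    have : ((a : Module.Dual ℝ V)) (v (a : Module.Dual ℝ V)) = 0 := hz
    rw [(hv (a : Module.Dual ℝ V) a.2).1] at this
    exact one_ne_zero this
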